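/- arXiv:2003.00540 — 2 statements merged into one kernel-verified Lean document; each statement's English description precedes it below -/
import Mathlib

section
/- Let λ and μ be partitions with μ ⊆ λ and λ_1 = ℓ(λ') ≤ n. For all 1 ≤ i, j ≤ n, ∑_{p ∈ L(i,j)} wt(p) = e_{λ'_j − μ'_i − j + i}(x_1, x_2, …, t_{μ'_i+1}, t_{μ'_i+2}, …, t_{λ'_j−1}). -/
open scoped Classical

namespace GrothJT

/-! ## Partitions -/

/-- A partition: a weakly decreasing sequence of nonnegative integers with finitely many
nonzero terms.  `part i` is the `i`-th part `λ_i` (indices `i ≥ 1` are the relevant ones). -/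
structure Partition where
  part : ℕ → ℕ
  antitone' : ∀ i j : ℕ, i ≤ j → part j ≤ part i
  eventually_zero : ∃ N, ∀ i, N ≤ i → part i = 0

namespace Partition

/-- The conjugate partition: `conj lam j = #{i ≥ 1 : λ_i ≥ j}`. -/
noncomputable def conj (lam : Partition) (j : ℕ) : ℕ :=
  Set.ncard {i : ℕ | 1 ≤ i ∧ j ≤ lam.part i}

/-- The cells of the Young diagram of a partition (row `i`, column `j`, both `≥ 1`). -/
def cells (lam : Partition) : Set (ℕ × ℕ) :=
  {c | 1 ≤ c.1 ∧ 1 ≤ c.2 ∧ c.2 ≤ lam.part c.1}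

/-- `len lam = ℓ(λ)`, the number of nonzero parts. -/
noncomputable def len (lam : Partition) : ℕ := lam.conj 1

/-- The empty partition. -/
protected def zero : Partition :=
  ⟨fun _ => 0, fun _ _ _ => le_rfl, ⟨0, fun _ _ => rfl⟩⟩

/-- `Sub mu lam` means `μ ⊆ λ`. -/
def Sub (mu lam : Partition) : Prop := ∀ i, mu.part i ≤ lam.part i

end Partition

/-- The cells of the skew shape `λ/μ`. -/
def skewCells (lam mu : Partition) : Set (ℕ × ℕ) := lam.cells \ mu.cells

/-! ## Formal power series in the variables `x = (x_1, x_2, …)` and `t = (t_1, t_2, …)` -/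

/-- Variable indices: `Sum.inl i` is the variable `x_i`, and `Sum.inr i` is `t_i`
(only indices `i ≥ 1` are used). -/
abbrev Var := ℕ ⊕ ℕ

abbrev PS := MvPowerSeries Var ℤ

/-- The elementary symmetric function of degree `k` in the set `V` of variables,
as a formal power series: `e_0 = 1` and `e_k = 0` for `k < 0`. -/
noncomputable def eVar (V : Set Var) (k : ℤ) : PS := fun d =>
  if 0 ≤ k ∧ (∀ v, d v ≤ 1) ∧ (∀ v, d v ≠ 0 → v ∈ V) ∧ ((d.sum fun _ m => m : ℕ) : ℤ) = k
  then 1 else 0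

/-- The set of all the variables `x_1, x_2, …`. -/
def xVars : Set Var := {v | ∃ i, 1 ≤ i ∧ v = Sum.inl i}

/-- The set of the variables `t_a, t_{a+1}, …, t_b`. -/
def tRange (a b : ℕ) : Set Var := {v | ∃ i, a ≤ i ∧ i ≤ b ∧ v = Sum.inr i}

/-! ## Reverse plane partitions and refined dual stable Grothendieck polynomials -/

/-- A reverse plane partition of shape `λ/μ`: a filling of the skew shape with positive
integers, weakly increasing along each row and each column (and `0` outside the shape). -/
structure RPP (lam mu : Partition) where
  entry : ℕ × ℕ → ℕ
  pos : ∀ c ∈ skewCells lam mu, 1 ≤ entry c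
  zero_outside : ∀ c, c ∉ skewCells lam mu → entry c = 0
  row_weak : ∀ i j, (i, j) ∈ skewCells lam mu → (i, j + 1) ∈ skewCells lam mu →
    entry (i, j) ≤ entry (i, j + 1)
  col_weak : ∀ i j, (i, j) ∈ skewCells lam mu → (i + 1, j) ∈ skewCells lam mu →
    entry (i, j) ≤ entry (i + 1, j)

/-- The exponent of the weight monomial `wt(R) = ∏ x_i^{a_i(R)} t_i^{b_i(R)}` of an RPP:
`a_i(R)` is the number of columns containing an `i`, and `b_i(R)` is the number of cells
`(i,j)` with `R(i,j) = R(i+1,j)`. -/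
noncomputable def rppExp (lam mu : Partition) (R : RPP lam mu) : Var → ℕ
  | Sum.inl i => Set.ncard {j : ℕ | ∃ r, (r, j) ∈ skewCells lam mu ∧ R.entry (r, j) = i}
  | Sum.inr i => Set.ncard {j : ℕ | (i, j) ∈ skewCells lam mu ∧ (i + 1, j) ∈ skewCells lam mu ∧
      R.entry (i, j) = R.entry (i + 1, j)}

/-- The refined dual stable Grothendieck polynomial
`g̃_{λ/μ}(x;t) = ∑_{R ∈ RPP(λ/μ)} wt(R)`, as a formal power series: the coefficient of a
monomial is the number of RPPs of shape `λ/μ` with that weight. -/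
noncomputable def gt (lam mu : Partition) : PS := fun d =>
  (Set.ncard {R : RPP lam mu | ∀ v, rppExp lam mu R v = d v} : ℤ)

/-- The Jacobi–Trudi matrix whose `(i,j)` entry (1-indexed) is
`e_{λ'_i - μ'_j - i + j}(x_1, x_2, …, t_{μ'_j+1}, …, t_{λ'_i-1})`. -/
noncomputable def JTmat (lam mu : Partition) (n : ℕ) : Matrix (Fin n) (Fin n) PS :=
  Matrix.of fun i j =>
    eVar (xVars ∪ tRange (mu.conj (j.1 + 1) + 1) (lam.conj (i.1 + 1) - 1))
      ((lam.conj (i.1 + 1) : ℤ) - (mu.conj (j.1 + 1) : ℤ) - (i.1 + 1) + (j.1 + 1))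

/-! ## `x`-only versions (dual stable Grothendieck polynomials) -/

/-- The elementary symmetric function `e_k(x_1, x_2, …)` in the variables `x_i`, `i ≥ 1`. -/
noncomputable def eX (k : ℤ) : MvPowerSeries ℕ ℤ := fun d =>
  if 0 ≤ k ∧ (∀ v, d v ≤ 1) ∧ d 0 = 0 ∧ ((d.sum fun _ m => m : ℕ) : ℤ) = k then 1 else 0

/-- The dual stable Grothendieck polynomial `g_{λ/μ}(x) = ∑_{R ∈ RPP(λ/μ)} ∏ x_i^{a_i(R)}`. -/
noncomputable def gx (lam mu : Partition) : MvPowerSeries ℕ ℤ := fun d =>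
  (Set.ncard {R : RPP lam mu |
    ∀ i, Set.ncard {j : ℕ | ∃ r, (r, j) ∈ skewCells lam mu ∧ R.entry (r, j) = i} = d i} : ℤ)

/-- `ibinom m k` is the binomial coefficient `C(m,k)`, with `C(m,k) = δ_{k,0}` for `m < 0`. -/
def ibinom (m : ℤ) (k : ℕ) : ℤ :=
  if m < 0 then (if k = 0 then 1 else 0) else (m.toNat.choose k : ℤ)


/-! ## Lattice paths in `G = ℕ × ℕ_ω` -/

/-- A path in `G = ℕ × ℕ_ω`: a pair of infinite sequences of points whose consecutive
differences are up steps `(0,1)` or diagonal steps `(1,1)`.  Since every step raises the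
height by one, the point at height `m` (resp. `ω + m`) has first coordinate `lo m`
(resp. `hi m`).  Both sequences are eventually constant, and the second one starts at the
limit of the first. -/
structure PathLP where
  lo : ℕ → ℕ
  hi : ℕ → ℕ
  lo_step : ∀ m, lo (m + 1) = lo m ∨ lo (m + 1) = lo m + 1
  hi_step : ∀ m, hi (m + 1) = hi m ∨ hi (m + 1) = hi m + 1
  lo_eventually : ∃ N, ∀ m, N ≤ m → lo m = lo N
  hi_eventually : ∃ N, ∀ m, N ≤ m → hi m = hi N
  link : ∃ N, (∀ m, N ≤ m → lo m = lo N) ∧ hi 0 = lo N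

/-- `PathFromTo p a b`: `p` is a path from `(a, 0)` to `(b, 2ω)`. -/
def PathFromTo (p : PathLP) (a b : ℕ) : Prop :=
  p.lo 0 = a ∧ ∃ N, ∀ m, N ≤ m → p.hi m = b

/-- The exponent of the weight monomial `wt(p) = ∏ x_i^{a_i(p)} t_i^{b_i(p)}` of a path:
`a_i(p)` (resp. `b_i(p)`) is the number of diagonal steps ending at height `i`
(resp. `ω + i`). -/
noncomputable def pathExp (p : PathLP) : Var → ℕ
  | Sum.inl i => if 1 ≤ i ∧ p.lo i = p.lo (i - 1) + 1 then 1 else 0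
  | Sum.inr i => if 1 ≤ i ∧ p.hi i = p.hi (i - 1) + 1 then 1 else 0

/-- `L(i,j)`: the set of paths from `(μ'_i + n - i, 0)` to `(λ'_j + n - j, 2ω)` with no
diagonal step ending at a height in `{ω+1, …, ω+μ'_i}` nor at a height above
`ω + λ'_j - 1`. -/
def Lij (lam mu : Partition) (n i j : ℕ) : Set PathLP :=
  {p | PathFromTo p (mu.conj i + n - i) (lam.conj j + n - j) ∧
    (∀ m, 1 ≤ m → m ≤ mu.conj i → p.hi m = p.hi (m - 1)) ∧
    (∀ m, 1 ≤ m → lam.conj j ≤ m → p.hi m = p.hi (m - 1))}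

/-- An `n`-path. -/
abbrev NPath (n : ℕ) := Fin n → PathLP

/-- `InL lam mu n π p` : the `n`-path `p` lies in `L(π)`,
i.e. `p_i ∈ L(i, π(i))` for all `i` (1-indexed). -/
def InL (lam mu : Partition) (n : ℕ) (π : Equiv.Perm (Fin n)) (p : NPath n) : Prop :=
  ∀ i : Fin n, p i ∈ Lij lam mu n (i.1 + 1) ((π i).1 + 1)

/-- Two paths have a common point. -/
def Crossing (p q : PathLP) : Prop := (∃ m, p.lo m = q.lo m) ∨ (∃ m, p.hi m = q.hi m)

/-- An `n`-path is noncrossing if no two of its paths share a point. -/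
def IsNC (n : ℕ) (p : NPath n) : Prop := ∀ i j : Fin n, i ≠ j → ¬ Crossing (p i) (p j)

/-! ## The blocks `D_k` -/

/-- The set of distinct nonzero parts of `μ`. -/
def partsSet (mu : Partition) : Set ℕ := {v | 1 ≤ v ∧ ∃ i, 1 ≤ i ∧ mu.part i = v}

/-- `r`, the number of distinct nonzero parts of `μ`. -/
noncomputable def rDist (mu : Partition) : ℕ := (partsSet mu).ncard

/-- `dSeq mu n 0 = d_0 = n`, and for `1 ≤ k ≤ r`, `dSeq mu n k = d_k` is the `k`-th largest
distinct nonzero part of `μ`; for `k > r` it is `0` (in particular `d_{r+1} = 0`). -/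
noncomputable def dSeq (mu : Partition) (n : ℕ) : ℕ → ℕ
  | 0 => n
  | (k + 1) => sSup {v | v ∈ partsSet mu ∧ Set.ncard {w ∈ partsSet mu | v ≤ w} = k + 1}

/-- The block `D_k = {d_k + 1, …, d_{k-1}}` of column indices. -/
def Dblock (mu : Partition) (n k : ℕ) : Set ℕ :=
  {j | dSeq mu n k < j ∧ j ≤ dSeq mu n (k - 1)}

/-- An `n`-path is semi-noncrossing if `p_i` and `p_j` have no common point whenever
`i ≠ j` both lie in some `D_k` with `1 ≤ k ≤ r`. -/
def IsSNC (mu : Partition) (n : ℕ) (p : NPath n) : Prop :=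
  ∀ k, 1 ≤ k → k ≤ rDist mu →
    ∀ i j : Fin n, i ≠ j → (i.1 + 1) ∈ Dblock mu n k → (j.1 + 1) ∈ Dblock mu n k →
      ¬ Crossing (p i) (p j)

/-- The set of semi-noncrossing `n`-paths in `L`. -/
def SNCset (lam mu : Partition) (n : ℕ) : Set (NPath n) :=
  {p | (∃ π, InL lam mu n π p) ∧ IsSNC mu n p}

/-- The (unsigned) weight exponent of an `n`-path: `wt(p_1) ⋯ wt(p_n)`. -/
noncomputable def npathExp (n : ℕ) (p : NPath n) : Var → ℕ :=
  fun v => ∑ i : Fin n, pathExp (p i) v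

/-- The signed sum `∑_{p ∈ L^SNC} wt(p)` of the weights of all semi-noncrossing `n`-paths,
as a formal power series: the coefficient of a monomial is `∑_π sign(π) · #{p ∈ L^SNC(π)}`
with the given weight (the type of an `n`-path in `L` is unique). -/
noncomputable def sncSum (lam mu : Partition) (n : ℕ) : PS := fun d =>
  ∑ π : Equiv.Perm (Fin n),
    ((Equiv.Perm.sign π : ℤˣ) : ℤ) *
      (Set.ncard {p : NPath n | InL lam mu n π p ∧ IsSNC mu n p ∧
        ∀ v, npathExp n p v = d v} : ℤ)

/-- The sum `∑_{p ∈ L(i,j)} wt(p)` as a formal power series. -/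
noncomputable def LijSum (lam mu : Partition) (n i j : ℕ) : PS := fun d =>
  (Set.ncard {p ∈ Lij lam mu n i j | ∀ v, pathExp p v = d v} : ℤ)


/-! ## Extended integers and tableaux -/

/-- Extended integers `{1̄ < 2̄ < ⋯ < 1 < 2 < ⋯ < 1* < 2* < ⋯}`:
`bar i` is the negative entry `ī`, `pl i` is the ordinary entry `i`, and `st i` is the
`ω`-entry `i*`. -/
abbrev Ext := Lex (ℕ ⊕ Lex (ℕ ⊕ ℕ))

def bar (i : ℕ) : Ext := toLex (Sum.inl i)
def pl (i : ℕ) : Ext := toLex (Sum.inr (toLex (Sum.inl i)))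
def st (i : ℕ) : Ext := toLex (Sum.inr (toLex (Sum.inr i)))

/-- A tableau: a partial filling of `ℤ⁺ × ℤ⁺` (as a subset of `ℕ × ℕ`) with extended
integers; `none` means the cell is absent. -/
abbrev Tb := ℕ × ℕ → Option Ext

/-- The `k`-th smallest element of a set of extended integers (1-indexed); `none` if there
is no element `e` with exactly `k` elements `≤ e` in the set. -/
noncomputable def nthSmall (S : Set Ext) (k : ℕ) : Option Ext :=
  if h : ∃ e, e ∈ S ∧ Set.ncard {e' ∈ S | e' ≤ e} = k then some h.choose else none

/-- The set of labels of the diagonal steps of a path: a diagonal step ending at height `m`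
is recorded as `pl m`, and one ending at height `ω + m` as `st m`. -/
def labelSet (p : PathLP) : Set Ext :=
  {e | ∃ m, 1 ≤ m ∧ ((p.lo m = p.lo (m - 1) + 1 ∧ e = pl m) ∨
    (p.hi m = p.hi (m - 1) + 1 ∧ e = st m))}

/-- The map `Tab` sending an `n`-path to a tableau: for each `i` and `k ≥ 1`, the cell
`(α_i + k, i)` contains the ending height of the `k`-th diagonal step of `p_i`. -/
noncomputable def TabU (alpha : ℕ → ℕ) (n : ℕ) (p : NPath n) : Tb := fun c =>
  if h : 1 ≤ c.2 ∧ c.2 ≤ n ∧ alpha c.2 < c.1 then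
    nthSmall (labelSet (p ⟨c.2 - 1, by omega⟩)) (c.1 - alpha c.2)
  else none

/-! ## Vertical tableaux -/

/-- A vertical tableau with cell set `S`: entries from `{1 < 2 < ⋯ < 1* < 2* < ⋯}`,
strictly increasing down each column, with support exactly `S`. -/
def IsVTsh (S : Set (ℕ × ℕ)) (T : Tb) : Prop :=
  (∀ c, (T c).isSome ↔ c ∈ S) ∧
  (∀ c e, T c = some e → ∃ a, 1 ≤ a ∧ (e = pl a ∨ e = st a)) ∧
  (∀ i j e₁ e₂, T (i, j) = some e₁ → T (i + 1, j) = some e₂ → e₁ < e₂)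

/-- The cells of the vertical diagram `V(β)/V(α)` (columns `1 ≤ j ≤ n`). -/
def VTcells (alpha beta : ℕ → ℕ) (n : ℕ) : Set (ℕ × ℕ) :=
  {c | 1 ≤ c.2 ∧ c.2 ≤ n ∧ alpha c.2 < c.1 ∧ c.1 ≤ beta c.2}

/-- `L(α,β)`: the set of `n`-paths `(p_1, …, p_n)` where `p_i` is a path from
`(α_i + n - i, 0)` to `(β_i + n - i, 2ω)`. -/
def Lab (alpha beta : ℕ → ℕ) (n : ℕ) : Set (NPath n) :=
  {p | ∀ i : Fin n, PathFromTo (p i) (alpha (i.1 + 1) + n - (i.1 + 1))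
    (beta (i.1 + 1) + n - (i.1 + 1))}

/-- The cells of the vertical diagram `π(λ)`: column `j` (for `1 ≤ j ≤ n`) has the cells
`(i, j)` with `1 ≤ i ≤ λ'_{π(j)} - π(j) + j`. -/
def permLamCells (lam : Partition) (n : ℕ) (π : Equiv.Perm (Fin n)) : Set (ℕ × ℕ) :=
  {c | ∃ h : 1 ≤ c.2 ∧ c.2 ≤ n, 1 ≤ c.1 ∧
    (c.1 : ℤ) ≤ (lam.conj ((π ⟨c.2 - 1, by omega⟩).1 + 1) : ℤ) -
      ((π ⟨c.2 - 1, by omega⟩).1 + 1) + c.2}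

/-- The cells of the vertical diagram `V(μ')` of `μ` (columns `1 ≤ j ≤ n`). -/
def muVertCells (mu : Partition) (n : ℕ) : Set (ℕ × ℕ) :=
  {c | 1 ≤ c.2 ∧ c.2 ≤ n ∧ 1 ≤ c.1 ∧ c.1 ≤ mu.conj c.2}

/-! ## RSE-tableaux (in the unified extended-integer form) -/

/-- An RSE-tableau of shape `λ` and level `k`, with the entries of `R` taken from
`{1̄ < 2̄ < ⋯ < 1 < 2 < ⋯}` (the set `oRSE_k(λ)`), viewed as a single tableau of shape `λ`
over the extended integers (entries `a` of the elegant tableau `E` written as `a*`):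
the support is the Young diagram of `λ`; rows and columns weakly increase; there are no
`ω`-entries in rows `≤ k`; an `ω`-entry `a*` in row `i` satisfies `k ≤ a` and
`1 ≤ a ≤ i - 1` (`E` is elegant with entries `≥ k`); `ω`-entries strictly increase down
columns (`E` is an SSYT); and non-`ω`-entries strictly increase down columns within rows
`≥ k` (rows `≥ k` of `R` form an SSYT). -/
def IsORSE (lam : Partition) (k : ℕ) (T : Tb) : Prop :=
  (∀ c, (T c).isSome ↔ c ∈ lam.cells) ∧
  (∀ c a, T c = some (bar a) → 1 ≤ a) ∧
  (∀ c a, T c = some (pl a) → 1 ≤ a) ∧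
  (∀ i j e₁ e₂, T (i, j) = some e₁ → T (i, j + 1) = some e₂ → e₁ ≤ e₂) ∧
  (∀ i j e₁ e₂, T (i, j) = some e₁ → T (i + 1, j) = some e₂ → e₁ ≤ e₂) ∧
  (∀ i j a, T (i, j) = some (st a) → k < i) ∧
  (∀ i j a, T (i, j) = some (st a) → k ≤ a ∧ 1 ≤ a ∧ a + 1 ≤ i) ∧
  (∀ i j a b, T (i, j) = some (st a) → T (i + 1, j) = some (st b) → a < b) ∧
  (∀ i j e₁ e₂, k ≤ i → T (i, j) = some e₁ → (¬ ∃ a, e₁ = st a) →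
    T (i + 1, j) = some e₂ → (¬ ∃ a, e₂ = st a) → e₁ < e₂)

/-- A skew RSE-tableau of shape `λ/μ` and level `k`, viewed (via the identification filling
every cell of row `i` of `μ` with `ī`) as a tableau of shape `λ` over the extended
integers: an element of `oRSE_k(λ)` whose negative entries are exactly `ī` on row `i` of
`μ`, and whose `ω`-entries `a*` in column `j` moreover satisfy `μ'_j + 1 ≤ a`
(`E` is `μ`-elegant). -/
def IsSkewRSE (lam mu : Partition) (k : ℕ) (T : Tb) : Prop :=
  IsORSE lam k T ∧
  (∀ i j, (i, j) ∈ mu.cells → T (i, j) = some (bar i)) ∧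
  (∀ i j a, T (i, j) = some (bar a) → (i, j) ∈ mu.cells) ∧
  (∀ i j a, T (i, j) = some (st a) → mu.conj j + 1 ≤ a)

/-- `RSE_k(λ/μ)` as a set of tableaux. -/
def RSEset (lam mu : Partition) (k : ℕ) : Set Tb := {T | IsSkewRSE lam mu k T}

/-- The weight exponent of an RSE-tableau `T = (R, E)`:
`wt(T) = wt(R) · t_E = ∏ x_i^{a_i(R)} t_i^{b_i(R) + c_i(E)}`. -/
noncomputable def rseWtExp (T : Tb) : Var → ℕ
  | Sum.inl i => Set.ncard {j : ℕ | ∃ r, T (r, j) = some (pl i)}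
  | Sum.inr i => Set.ncard {j : ℕ | ∃ a, T (i, j) = some (pl a) ∧ T (i + 1, j) = some (pl a)}
      + Set.ncard {c : ℕ × ℕ | T c = some (st i)}

/-- `∑_{T ∈ RSE_k(λ/μ)} wt(T)` as a formal power series. -/
noncomputable def rseSum (lam mu : Partition) (k : ℕ) : PS := fun d =>
  (Set.ncard {T ∈ RSEset lam mu k | ∀ v, rseWtExp T v = d v} : ℤ)

/-- `∑_{T ∈ S} wt(T)` for a set `S` of RSE-tableaux, as a formal power series. -/
noncomputable def rseImageSum (S : Set Tb) : PS := fun d =>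
  (Set.ncard {T ∈ S | ∀ v, rseWtExp T v = d v} : ℤ)

/-- Fill the cells of `μ` with the negative entries `ī` (the identification of a
skew tableau of shape `λ/μ` with a tableau of shape `λ` over the extended integers). -/
noncomputable def addBars (mu : Partition) (T : Tb) : Tb := fun c =>
  if c ∈ mu.cells then some (bar c.1) else T c


/-! ## The Lam–Pylyavskyy maps `π↑` and `π↓` -/

/-- Update a tableau at one cell. -/
def upd (T : Tb) (c : ℕ × ℕ) (e : Option Ext) : Tb := fun c' => if c' = c then e else T c'

/-- The `R`-part of an RSE-tableau (the non-`ω`-entries). -/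
noncomputable def Rpart (T : Tb) : Tb := fun c =>
  (T c).bind fun e => if ∃ a, e = st a then none else some e

/-- The `E`-part of an RSE-tableau (the `ω`-entries). -/
noncomputable def Spart (T : Tb) : Tb := fun c =>
  (T c).bind fun e => if ∃ a, e = st a then some e else none

/-- The column where a non-bumping RSK insertion into row `i` places its entry:
one past the last filled cell of row `i`; if row `i` is empty, aligned with the first
filled cell of row `i - 1`. -/
noncomputable def placeCol (S : Tb) (i : ℕ) : ℕ :=
  if ∃ j, (S (i, j)).isSome then sSup {j | (S (i, j)).isSome} + 1
  else if ∃ j, (S (i - 1, j)).isSome then sInf {j | (S (i - 1, j)).isSome}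
  else 1

/-- RSK row insertion of the entry `a` into the rows `≥ i` of the tableau `S` (with fuel):
in row `i`, the leftmost entry strictly greater than `a` is replaced by `a` and bumped into
the next row; if there is no such entry, `a` is placed at the end of row `i`. -/
noncomputable def insIn : ℕ → Tb → ℕ → Ext → Tb
  | 0, S, _, _ => S
  | (F + 1), S, i, a =>
    if hb : ∃ j, 1 ≤ j ∧ ∃ b, S (i, j) = some b ∧ a < b then
      match S (i, Nat.find hb) with
      | some b => insIn F (upd S (i, Nat.find hb) (some a)) (i + 1) b
      | none => S
    else upd S (i, placeCol S i) (some a)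

/-- The level-decreasing map `π↑` from level `k + 1` to level `k` (with all bounds given by
`N`): the entry `R(k,j)` is novel if `R(k,j) ≠ R(k+1,j)` (in particular if the cell
`(k+1,j)` is absent); row `k` of `R` is deleted and the rows `≥ k + 1` are shifted up by
one; the novel entries are RSK-inserted, in weakly increasing order (= increasing column
order), into the rows `≥ k`; the cells of the horizontal strip `sh(R)/sh(R')` left empty
are added to `E` filled with `k` (i.e. with `k*`). -/
noncomputable def piUp (N k : ℕ) (T : Tb) : Tb :=
  let R := Rpart T
  let R1 : Tb := fun c => if c.1 < k then R c else R (c.1 + 1, c.2)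
  let cols := (List.range (N + 1)).filter fun j =>
    decide (1 ≤ j ∧ (R (k, j)).isSome ∧ R (k, j) ≠ R (k + 1, j))
  let R2 := cols.foldl (fun S j =>
    match R (k, j) with
    | some a => insIn N S k a
    | none => S) R1
  fun c =>
    match R2 c with
    | some e => some e
    | none =>
      match Spart T c with
      | some e => some e
      | none => if (R c).isSome then some (st k) else none

/-- `piUpPow N k` is the `k`-fold application `π↑^k` starting from level `k + 1`,
i.e. `π↑ (level k+1 → k)` first, then down to level `1`. -/
noncomputable def piUpPow (N : ℕ) : ℕ → Tb → Tb
  | 0 => id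
  | (k + 1) => fun T => piUpPow N k (piUp N (k + 1) T)

/-- Reverse RSK row insertion of the value `v` into row `i` (with fuel), continuing upward
until a value is bumped out of row `k`: in row `i` the rightmost entry `a < v` is replaced
by `v`, and `a` is carried to row `i - 1`; the result is the updated tableau together with
the column and the value bumped out of row `k`. -/
noncomputable def revIns : ℕ → ℕ → ℕ → Tb → Ext → Tb × ℕ × Ext
  | 0, _, _, S, v => (S, 0, v)
  | (F + 1), k, i, S, v =>
    let j0 := sSup {j | ∃ a, S (i, j) = some a ∧ a < v}
    match S (i, j0) with
    | some a =>
      if a < v then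
        if i ≤ k then (upd S (i, j0) (some v), j0, a)
        else revIns F k (i - 1) (upd S (i, j0) (some v)) a
      else (S, 0, v)
    | none => (S, 0, v)

/-- Start the reverse RSK algorithm on the rows `≥ k` of `S` from the last (bottom) cell of
column `c`: that cell is removed and its value is reverse-inserted into the row above. -/
noncomputable def revStart (F k : ℕ) (S : Tb) (c : ℕ) : Tb × ℕ × Ext :=
  let i0 := sSup {i | k ≤ i ∧ (S (i, c)).isSome}
  match S (i0, c) with
  | some v =>
    if i0 ≤ k then (upd S (i0, c) none, c, v)
    else revIns F k (i0 - 1) (upd S (i0, c) none) v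
  | none => (S, 0, pl 0)

/-- The level-increasing map `π↓` from level `k` to level `k + 1` (with all bounds given by
`N`): for each column `c` (rightmost first) of `rows ≥ k` of `R` whose column of `E`
contains no `k`, the reverse RSK algorithm is applied starting from the last cell of column
`c`, bumping a value `a_i` out of row `k` at some column `b_i`; then the rows `≥ k` are
shifted down by one, and row `k` is refilled: `a_i` at column `b_i`, and the entry directly
below in every other (originally filled) column; all entries `k` of `E` are removed. -/
noncomputable def piDown (N k : ℕ) (T : Tb) : Tb :=
  let R := Rpart T
  let cols := (List.range (N + 1)).filter fun j =>
    decide (1 ≤ j ∧ (∃ i, k ≤ i ∧ (R (i, j)).isSome) ∧ ¬ ∃ i, T (i, j) = some (st k))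
  let step : ℕ → Tb × (ℕ → Option Ext) → Tb × (ℕ → Option Ext) := fun c SO =>
    let res := revStart N k SO.1 c
    (res.1, fun j => if j = res.2.1 then some res.2.2 else SO.2 j)
  let RO := cols.foldr step (R, fun _ => none)
  let R2 : Tb := fun c =>
    if c.1 < k then RO.1 c
    else if c.1 = k then
      (if (RO.2 c.2).isSome then RO.2 c.2
       else if (R (k, c.2)).isSome then RO.1 (k, c.2) else none)
    else RO.1 (c.1 - 1, c.2)
  fun c =>
    match R2 c with
    | some e => some e
    | none =>
      match T c with
      | some e => if ∃ a, e = st a ∧ a ≠ k then some e else none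
      | none => none

/-! ## Column restrictions and concatenation -/

/-- The restriction `col_{≤ s}` of a tableau to its columns `1, …, s`. -/
def colLE (s : ℕ) (T : Tb) : Tb := fun c => if c.2 ≤ s then T c else none

/-- The restriction `col_{≥ s}` of a tableau to its columns `s, s + 1, …`. -/
def colGE (s : ℕ) (T : Tb) : Tb := fun c => if s ≤ c.2 then T c else none

/-- Concatenation `T₁ ⊔ T₂` of tableaux (with disjoint column supports, kept at their
absolute positions). -/
def hcat (T₁ T₂ : Tb) : Tb := fun c => (T₁ c).orElse fun _ => T₂ c

/-- A reverse plane partition over the extended integers: entries weakly increase along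
rows and columns. -/
def IsRPPE (T : Tb) : Prop :=
  (∀ i j e₁ e₂, T (i, j) = some e₁ → T (i, j + 1) = some e₂ → e₁ ≤ e₂) ∧
  (∀ i j e₁ e₂, T (i, j) = some e₁ → T (i + 1, j) = some e₂ → e₁ ≤ e₂)

/-- `T₁ ≤ T₂` means the concatenation `T₁ ⊔ T₂` is an RPP over the extended integers. -/
def leTab (T₁ T₂ : Tb) : Prop := IsRPPE (hcat T₁ T₂)

/-- A bound large enough for all bumping processes inside the shape `λ`. -/
noncomputable def Nbound (lam : Partition) : ℕ := lam.part 1 + lam.len + 2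


/-! ## Auxiliary lemmas for `LijSum_eq_eVar` -/

/-- Cumulative sum `g 1 + ⋯ + g m`. -/
noncomputable def cum (g : ℕ → ℕ) (m : ℕ) : ℕ := ∑ m' ∈ Finset.range m, g (m' + 1)

lemma cum_zero (g : ℕ → ℕ) : cum g 0 = 0 := by simp [cum]

lemma cum_succ (g : ℕ → ℕ) (m : ℕ) : cum g (m + 1) = cum g m + g (m + 1) :=
  Finset.sum_range_succ _ _

lemma cum_stable (g : ℕ → ℕ) (N : ℕ) (hN : ∀ m, N < m → g m = 0) :
    ∀ m, N ≤ m → cum g m = cum g N := by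
  intro m hm
  induction m, hm using Nat.le_induction with
  | base => rfl
  | succ m hm ih =>
    rw [cum_succ, hN (m + 1) (by omega)]
    omega

lemma sum_eq_cum (d : Var →₀ ℕ) (N : ℕ) (h0 : d (Sum.inl 0) = 0) (h0' : d (Sum.inr 0) = 0)
    (hN : ∀ m, N < m → d (Sum.inl m) = 0 ∧ d (Sum.inr m) = 0) :
    (d.sum fun _ m => m) =
      cum (fun m => d (Sum.inl m)) N + cum (fun m => d (Sum.inr m)) N := by
  have hsub : d.support ⊆ (Finset.range (N + 1)).image (Sum.inl : ℕ → Var) ∪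
      (Finset.range (N + 1)).image (Sum.inr : ℕ → Var) := by
    intro v hv
    have hv' : d v ≠ 0 := Finsupp.mem_support_iff.mp hv
    rcases v with m | m
    · have hm : m ≤ N := by by_contra h; exact hv' (hN m (by omega)).1
      exact Finset.mem_union_left _ (Finset.mem_image_of_mem _ (Finset.mem_range.mpr (by omega)))
    · have hm : m ≤ N := by by_contra h; exact hv' (hN m (by omega)).2
      exact Finset.mem_union_right _ (Finset.mem_image_of_mem _ (Finset.mem_range.mpr (by omega)))
  have hdisj : Disjoint ((Finset.range (N + 1)).image (Sum.inl : ℕ → Var))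
      ((Finset.range (N + 1)).image (Sum.inr : ℕ → Var)) := by
    simp [Finset.disjoint_left]
  have hinl : ∀ x ∈ Finset.range (N + 1), ∀ y ∈ Finset.range (N + 1),
      (Sum.inl : ℕ → Var) x = Sum.inl y → x = y := fun x _ y _ h => by injection h
  have hinr : ∀ x ∈ Finset.range (N + 1), ∀ y ∈ Finset.range (N + 1),
      (Sum.inr : ℕ → Var) x = Sum.inr y → x = y := fun x _ y _ h => by injection h
  rw [Finsupp.sum_of_support_subset d hsub (fun _ m => m) (fun _ _ => rfl),
    Finset.sum_union hdisj, Finset.sum_image hinl, Finset.sum_image hinr,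
    Finset.sum_range_succ', Finset.sum_range_succ']
  simp [cum, h0, h0']

lemma pathLP_ext {p q : PathLP} (h1 : p.lo = q.lo) (h2 : p.hi = q.hi) : p = q := by
  obtain ⟨lo₁, hi₁, _, _, _, _, _⟩ := p
  obtain ⟨lo₂, hi₂, _, _, _, _, _⟩ := q
  have h1' : lo₁ = lo₂ := h1
  have h2' : hi₁ = hi₂ := h2
  subst h1'; subst h2'
  rfl

lemma lo_succ_exp (p : PathLP) (d : Var →₀ ℕ) (hd : ∀ v, pathExp p v = d v) (m : ℕ) :
    p.lo (m + 1) = p.lo m + d (Sum.inl (m + 1)) := by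
  have h := hd (Sum.inl (m + 1))
  simp only [pathExp, Nat.add_sub_cancel] at h
  rcases p.lo_step m with h1 | h1
  · rw [if_neg (by rintro ⟨-, h2⟩; omega)] at h
    omega
  · rw [if_pos ⟨by omega, h1⟩] at h
    omega

lemma hi_succ_exp (p : PathLP) (d : Var →₀ ℕ) (hd : ∀ v, pathExp p v = d v) (m : ℕ) :
    p.hi (m + 1) = p.hi m + d (Sum.inr (m + 1)) := by
  have h := hd (Sum.inr (m + 1))
  simp only [pathExp, Nat.add_sub_cancel] at h
  rcases p.hi_step m with h1 | h1
  · rw [if_neg (by rintro ⟨-, h2⟩; omega)] at h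
    omega
  · rw [if_pos ⟨by omega, h1⟩] at h
    omega

lemma lo_cum (p : PathLP) (d : Var →₀ ℕ) (hd : ∀ v, pathExp p v = d v) (m : ℕ) :
    p.lo m = p.lo 0 + cum (fun m' => d (Sum.inl m')) m := by
  induction m with
  | zero => rw [cum_zero]; omega
  | succ m ih => rw [lo_succ_exp p d hd m, ih, cum_succ]; omega

lemma hi_cum (p : PathLP) (d : Var →₀ ℕ) (hd : ∀ v, pathExp p v = d v) (m : ℕ) :
    p.hi m = p.hi 0 + cum (fun m' => d (Sum.inr m')) m := by
  induction m with
  | zero => rw [cum_zero]; omega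
  | succ m ih => rw [hi_succ_exp p d hd m, ih, cum_succ]; omega

lemma pathExp_of_recur (p : PathLP) (d : Var →₀ ℕ) (hle1 : ∀ v, d v ≤ 1)
    (h0x : d (Sum.inl 0) = 0) (h0t : d (Sum.inr 0) = 0)
    (hlo : ∀ m, p.lo (m + 1) = p.lo m + d (Sum.inl (m + 1)))
    (hhi : ∀ m, p.hi (m + 1) = p.hi m + d (Sum.inr (m + 1))) :
    ∀ v, pathExp p v = d v := by
  intro v
  rcases v with m | m
  · rcases m with _ | m
    · simpa [pathExp] using h0x.symm
    · have hstep := hlo m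
      have h1 := hle1 (Sum.inl (m + 1))
      simp only [pathExp, Nat.add_sub_cancel]
      by_cases hd1 : d (Sum.inl (m + 1)) = 1
      · rw [if_pos ⟨by omega, by omega⟩]
        omega
      · rw [if_neg (by rintro ⟨-, hc⟩; omega)]
        omega
  · rcases m with _ | m
    · simpa [pathExp] using h0t.symm
    · have hstep := hhi m
      have h1 := hle1 (Sum.inr (m + 1))
      simp only [pathExp, Nat.add_sub_cancel]
      by_cases hd1 : d (Sum.inr (m + 1)) = 1
      · rw [if_pos ⟨by omega, by omega⟩]
        omega
      · rw [if_neg (by rintro ⟨-, hc⟩; omega)]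
        omega

lemma valid_of_mem (lam mu : Partition) (n i j : ℕ) (hin : i ≤ n) (hjn : j ≤ n)
    (d : Var →₀ ℕ) (p : PathLP) (hp : p ∈ Lij lam mu n i j)
    (hd : ∀ v, pathExp p v = d v) :
    0 ≤ ((lam.conj j : ℤ) - (mu.conj i : ℤ) - j + i) ∧ (∀ v, d v ≤ 1) ∧
      (∀ v, d v ≠ 0 → v ∈ xVars ∪ tRange (mu.conj i + 1) (lam.conj j - 1)) ∧
      ((d.sum fun _ m => m : ℕ) : ℤ) = (lam.conj j : ℤ) - (mu.conj i : ℤ) - j + i := by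
  obtain ⟨⟨hlo0, Nb, hNb⟩, hc1, hc2⟩ := hp
  obtain ⟨Nl, hNl, hlink⟩ := p.link
  have hle1 : ∀ v, d v ≤ 1 := by
    intro v
    rw [← hd v]
    rcases v with m | m <;> simp only [pathExp] <;> split <;> omega
  have h0x : d (Sum.inl 0) = 0 := by rw [← hd]; simp [pathExp]
  have h0t : d (Sum.inr 0) = 0 := by rw [← hd]; simp [pathExp]
  have hsupp : ∀ v, d v ≠ 0 → v ∈ xVars ∪ tRange (mu.conj i + 1) (lam.conj j - 1) := by
    intro v hv
    rw [← hd v] at hv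
    rcases v with m | m
    · simp only [pathExp] at hv
      split at hv
      · next hcnd => exact Set.mem_union_left _ ⟨m, hcnd.1, rfl⟩
      · exact absurd rfl hv
    · simp only [pathExp] at hv
      split at hv
      · next hcnd =>
        obtain ⟨hm1, hstep⟩ := hcnd
        have hM : mu.conj i < m := by
          by_contra h
          have := hc1 m hm1 (by omega)
          omega
        have hL : m < lam.conj j := by
          by_contra h
          have := hc2 m hm1 (by omega)
          omega
        exact Set.mem_union_right _ ⟨m, by omega, by omega, rfl⟩
      · exact absurd rfl hv
  refine ⟨?_, hle1, hsupp, ?_⟩ <;>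
  · set Ns := d.support.sup (Sum.elim id id) with hNs
    set Nd := max (max Ns Nb) Nl with hNddef
    have hNd : ∀ m, Nd < m → d (Sum.inl m) = 0 ∧ d (Sum.inr m) = 0 := by
      intro m hm
      constructor
      · by_contra h
        have h2 := Finset.le_sup (f := Sum.elim id id) (Finsupp.mem_support_iff.mpr h)
        simp only [Sum.elim_inl, id_eq] at h2
        omega
      · by_contra h
        have h2 := Finset.le_sup (f := Sum.elim id id) (Finsupp.mem_support_iff.mpr h)
        simp only [Sum.elim_inr, id_eq] at h2
        omega
    have hsum2 := sum_eq_cum d Nd h0x h0t hNd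
    have e1 : p.hi Nd = lam.conj j + n - j := hNb Nd (by omega)
    have e2 : p.hi Nd = p.hi 0 + cum (fun m' => d (Sum.inr m')) Nd := hi_cum p d hd Nd
    have e3 : p.hi 0 = p.lo Nl := hlink
    have e4 : p.lo Nd = p.lo Nl := hNl Nd (by omega)
    have e5 : p.lo Nd = p.lo 0 + cum (fun m' => d (Sum.inl m')) Nd := lo_cum p d hd Nd
    omega

lemma existsUnique_path (lam mu : Partition) (n i j : ℕ) (hin : i ≤ n) (hjn : j ≤ n)
    (d : Var →₀ ℕ)
    (hK0 : 0 ≤ ((lam.conj j : ℤ) - (mu.conj i : ℤ) - j + i))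
    (hle1 : ∀ v, d v ≤ 1)
    (hsupp : ∀ v, d v ≠ 0 → v ∈ xVars ∪ tRange (mu.conj i + 1) (lam.conj j - 1))
    (hsum : ((d.sum fun _ m => m : ℕ) : ℤ) = (lam.conj j : ℤ) - (mu.conj i : ℤ) - j + i) :
    ∃! p : PathLP, p ∈ Lij lam mu n i j ∧ ∀ v, pathExp p v = d v := by
  have h0x : d (Sum.inl 0) = 0 := by
    by_contra h
    rcases hsupp _ h with hx | ht
    · obtain ⟨i0, h1, h2⟩ := hx
      injection h2 with h2
      omega
    · obtain ⟨i0, h1, h2, h3⟩ := ht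
      exact Sum.inl_ne_inr h3
  have h0t : d (Sum.inr 0) = 0 := by
    by_contra h
    rcases hsupp _ h with hx | ht
    · obtain ⟨i0, h1, h2⟩ := hx
      exact Sum.inr_ne_inl h2
    · obtain ⟨i0, h1, h2, h3⟩ := ht
      injection h3 with h3
      omega
  have hTzero1 : ∀ m, 1 ≤ m → m ≤ mu.conj i → d (Sum.inr m) = 0 := by
    intro m hm1 hm2
    by_contra h
    rcases hsupp _ h with hx | ht
    · obtain ⟨i0, h1, h2⟩ := hx
      exact Sum.inr_ne_inl h2
    · obtain ⟨i0, h1, h2, h3⟩ := ht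
      injection h3 with h3
      omega
  have hTzero2 : ∀ m, 1 ≤ m → lam.conj j ≤ m → d (Sum.inr m) = 0 := by
    intro m hm1 hm2
    by_contra h
    rcases hsupp _ h with hx | ht
    · obtain ⟨i0, h1, h2⟩ := hx
      exact Sum.inr_ne_inl h2
    · obtain ⟨i0, h1, h2, h3⟩ := ht
      injection h3 with h3
      omega
  set Ns := d.support.sup (Sum.elim id id) with hNs
  have hNd : ∀ m, Ns < m → d (Sum.inl m) = 0 ∧ d (Sum.inr m) = 0 := by
    intro m hm
    constructor
    · by_contra h
      have h2 := Finset.le_sup (f := Sum.elim id id) (Finsupp.mem_support_iff.mpr h)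
      simp only [Sum.elim_inl, id_eq] at h2
      omega
    · by_contra h
      have h2 := Finset.le_sup (f := Sum.elim id id) (Finsupp.mem_support_iff.mpr h)
      simp only [Sum.elim_inr, id_eq] at h2
      omega
  set a := mu.conj i + n - i with hadef
  set b := lam.conj j + n - j with hbdef
  have hsum2 := sum_eq_cum d Ns h0x h0t hNd
  have hba : b = a + (d.sum fun _ m => m) := by omega
  have hstabX := cum_stable (fun m => d (Sum.inl m)) Ns (fun m' h => (hNd m' h).1)
  have hstabT := cum_stable (fun m => d (Sum.inr m)) Ns (fun m' h => (hNd m' h).2)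
  let p0 : PathLP :=
    { lo := fun m => a + cum (fun m' => d (Sum.inl m')) m
      hi := fun m => a + cum (fun m' => d (Sum.inl m')) Ns + cum (fun m' => d (Sum.inr m')) m
      lo_step := by
        intro m
        have h1 := hle1 (Sum.inl (m + 1))
        have h2 := cum_succ (fun m' => d (Sum.inl m')) m
        omega
      hi_step := by
        intro m
        have h1 := hle1 (Sum.inr (m + 1))
        have h2 := cum_succ (fun m' => d (Sum.inr m')) m
        omega
      lo_eventually := ⟨Ns, fun m hm => by
        rw [hstabX m hm]⟩
      hi_eventually := ⟨Ns, fun m hm => by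
        rw [hstabT m hm]⟩
      link := ⟨Ns, fun m hm => by
        rw [hstabX m hm], by
        rw [cum_zero]
        omega⟩ }

  have hlo : ∀ m, p0.lo m = a + cum (fun m' => d (Sum.inl m')) m := fun _ => rfl
  have hhi : ∀ m, p0.hi m = a + cum (fun m' => d (Sum.inl m')) Ns +
      cum (fun m' => d (Sum.inr m')) m := fun _ => rfl
  have hexp : ∀ v, pathExp p0 v = d v := by
    apply pathExp_of_recur p0 d hle1 h0x h0t
    · intro m
      rw [hlo, hlo, cum_succ]
      omega
    · intro m
      rw [hhi, hhi, cum_succ]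
      omega
  refine ⟨p0, ⟨⟨⟨?_, Ns, ?_⟩, ?_, ?_⟩, hexp⟩, ?_⟩
  · rw [hlo, cum_zero]
    omega
  · intro m hm
    rw [hhi, hstabT m hm]
    omega
  · intro m hm1 hm2
    obtain ⟨m', rfl⟩ : ∃ m', m = m' + 1 := ⟨m - 1, by omega⟩
    have he : m' + 1 - 1 = m' := rfl
    rw [he, hhi, hhi, cum_succ, hTzero1 (m' + 1) hm1 hm2]
    omega
  · intro m hm1 hm2
    obtain ⟨m', rfl⟩ : ∃ m', m = m' + 1 := ⟨m - 1, by omega⟩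
    have he : m' + 1 - 1 = m' := rfl
    rw [he, hhi, hhi, cum_succ, hTzero2 (m' + 1) hm1 hm2]
    omega
  · rintro q ⟨⟨⟨hq0, Nb, hNb⟩, hc1, hc2⟩, hqd⟩
    obtain ⟨Nl, hNl, hlink⟩ := q.link
    have hqlo : ∀ m, q.lo m = a + cum (fun m' => d (Sum.inl m')) m := by
      intro m
      rw [lo_cum q d hqd m, hq0]
    have hqhi0 : q.hi 0 = a + cum (fun m' => d (Sum.inl m')) Ns := by
      rw [hlink]
      have h1 : q.lo (max Nl Ns) = q.lo Nl := hNl _ (le_max_left _ _)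
      rw [← h1, hqlo, hstabX _ (le_max_right _ _)]
    have hqhi : ∀ m, q.hi m = a + cum (fun m' => d (Sum.inl m')) Ns +
        cum (fun m' => d (Sum.inr m')) m := by
      intro m
      rw [hi_cum q d hqd m, hqhi0]
    apply pathLP_ext
    · funext m
      rw [hqlo, hlo]
    · funext m
      rw [hqhi, hhi]


/-- **The generating function of `L(i,j)`:**
`∑_{p ∈ L(i,j)} wt(p) = e_{λ'_j - μ'_i - j + i}(x_1, x_2, …, t_{μ'_i+1}, …, t_{λ'_j-1})`. -/
theorem LijSum_eq_eVar (lam mu : Partition) (n i j : ℕ) (hsub : Partition.Sub mu lam)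
    (hn : lam.part 1 ≤ n) (hi1 : 1 ≤ i) (hin : i ≤ n) (hj1 : 1 ≤ j) (hjn : j ≤ n) :
    LijSum lam mu n i j =
      eVar (xVars ∪ tRange (mu.conj i + 1) (lam.conj j - 1))
        ((lam.conj j : ℤ) - (mu.conj i : ℤ) - j + i) := by
  funext d
  simp only [LijSum, eVar]
  split_ifs with hcond
  · obtain ⟨hK0, hle1, hsupp, hsum⟩ := hcond
    obtain ⟨p0, hp0, huniq⟩ := existsUnique_path lam mu n i j hin hjn d hK0 hle1 hsupp hsum
    have hset : {p ∈ Lij lam mu n i j | ∀ v, pathExp p v = d v} = {p0} :=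
      Set.eq_singleton_iff_unique_mem.mpr ⟨hp0, fun q hq => huniq q hq⟩
    rw [hset, Set.ncard_singleton]
    rfl
  · have hempty : {p ∈ Lij lam mu n i j | ∀ v, pathExp p v = d v} = ∅ := by
      rw [Set.eq_empty_iff_forall_notMem]
      rintro p ⟨hp, hd⟩
      exact hcond (valid_of_mem lam mu n i j hin hjn d p hp hd)
    rw [hempty, Set.ncard_empty]
    rfl

end GrothJT
end

section
/- Let λ and μ be partitions with μ ⊆ λ and λ_1 = ℓ(λ') = n, and let p ∈ L. Then type(p) = π if and only if Tab(p) ∈ VT(π(λ)/μ). -/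
open scoped Classical

namespace GrothJT

/-! ### Auxiliary lemmas for the proof -/

section AuxProof

private lemma card_steps {f : ℕ → ℕ} (hs : ∀ m, f (m+1) = f m ∨ f (m+1) = f m + 1) (N : ℕ) :
    ((Finset.range N).filter fun m => f (m+1) = f m + 1).card + f 0 = f N := by
  induction N with
  | zero => simp
  | succ N ih =>
    rw [Finset.range_add_one, Finset.filter_insert]
    rcases hs N with h | h
    · rw [if_neg (by omega), h]; exact ih
    · rw [if_pos h, Finset.card_insert_of_notMem (by simp), h]; omega

private lemma steps_mono {f : ℕ → ℕ} (hs : ∀ m, f (m+1) = f m ∨ f (m+1) = f m + 1) :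
    Monotone f :=
  monotone_nat_of_le_succ fun m => by rcases hs m with h | h <;> omega

private lemma stepSet_ncard {f : ℕ → ℕ} (hs : ∀ m, f (m+1) = f m ∨ f (m+1) = f m + 1)
    {N : ℕ} (hst : ∀ m, N ≤ m → f m = f N) :
    {m | 1 ≤ m ∧ f m = f (m-1) + 1}.Finite ∧
      {m | 1 ≤ m ∧ f m = f (m-1) + 1}.ncard + f 0 = f N := by
  have hset : {m | 1 ≤ m ∧ f m = f (m-1) + 1} =
      ↑(((Finset.range N).filter fun m => f (m+1) = f m + 1).image (· + 1)) := by
    ext m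
    simp only [Set.mem_setOf_eq, Finset.coe_image, Set.mem_image, Finset.mem_coe,
      Finset.mem_filter, Finset.mem_range]
    constructor
    · rintro ⟨hm, hf⟩
      refine ⟨m - 1, ⟨?_, ?_⟩, by omega⟩
      · by_contra hcon
        have h1 : f m = f N := hst m (by omega)
        have h2 : f (m - 1) = f N := hst (m - 1) (by omega)
        omega
      · have hm1 : m - 1 + 1 = m := by omega
        rw [hm1]; exact hf
    · rintro ⟨m', ⟨-, hf⟩, rfl⟩
      refine ⟨by omega, ?_⟩
      simpa using hf
  refine ⟨?_, ?_⟩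
  · rw [hset]; exact Finset.finite_toSet _
  · rw [hset, Set.ncard_coe_finset,
      Finset.card_image_of_injective _ (add_left_injective 1)]
    exact card_steps hs N

private lemma pl_injective : Function.Injective pl := fun a b h => by
  simpa [pl] using h

private lemma st_injective : Function.Injective st := fun a b h => by
  simpa [st] using h

private lemma pl_ne_st (a b : ℕ) : pl a ≠ st b := by
  simp [pl, st]

private lemma labelSet_eq (p : PathLP) :
    labelSet p = pl '' {m | 1 ≤ m ∧ p.lo m = p.lo (m-1) + 1}
      ∪ st '' {m | 1 ≤ m ∧ p.hi m = p.hi (m-1) + 1} := by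
  ext e
  simp only [labelSet, Set.mem_setOf_eq, Set.mem_union, Set.mem_image]
  constructor
  · rintro ⟨m, hm, ⟨h1, rfl⟩ | ⟨h1, rfl⟩⟩
    · exact Or.inl ⟨m, ⟨hm, h1⟩, rfl⟩
    · exact Or.inr ⟨m, ⟨hm, h1⟩, rfl⟩
  · rintro (⟨m, ⟨hm, h1⟩, rfl⟩ | ⟨m, ⟨hm, h1⟩, rfl⟩)
    · exact ⟨m, hm, Or.inl ⟨h1, rfl⟩⟩
    · exact ⟨m, hm, Or.inr ⟨h1, rfl⟩⟩

private lemma pathFromTo_facts {p : PathLP} {a b : ℕ} (h : PathFromTo p a b) :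
    (labelSet p).Finite ∧ a ≤ b ∧ (labelSet p).ncard + a = b := by
  obtain ⟨hlo0, Nh, hNh⟩ := h
  obtain ⟨Nl, hNl, hlink⟩ := p.link
  have hmlo := steps_mono p.lo_step
  have hmhi := steps_mono p.hi_step
  have hsthi : ∀ m, Nh ≤ m → p.hi m = p.hi Nh := fun m hm => by
    rw [hNh m hm, hNh Nh le_rfl]
  obtain ⟨hfl, hcl⟩ := stepSet_ncard p.lo_step hNl
  obtain ⟨hfh, hch⟩ := stepSet_ncard p.hi_step hsthi
  have hbb : p.hi Nh = b := hNh Nh le_rfl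
  have h1 : p.lo 0 ≤ p.lo Nl := hmlo (Nat.zero_le _)
  have h2 : p.hi 0 ≤ p.hi Nh := hmhi (Nat.zero_le _)
  have hdisj : Disjoint (pl '' {m | 1 ≤ m ∧ p.lo m = p.lo (m-1) + 1})
      (st '' {m | 1 ≤ m ∧ p.hi m = p.hi (m-1) + 1}) := by
    rw [Set.disjoint_left]
    rintro x ⟨m, -, rfl⟩ ⟨m', -, hx⟩
    exact pl_ne_st m m' hx.symm
  refine ⟨?_, by omega, ?_⟩
  · rw [labelSet_eq]
    exact (hfl.image pl).union (hfh.image st)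
  · rw [labelSet_eq, Set.ncard_union_eq hdisj (hfl.image pl) (hfh.image st),
      Set.ncard_image_of_injective _ pl_injective,
      Set.ncard_image_of_injective _ st_injective]
    omega

private lemma rank_finite {S : Set Ext} (hS : S.Finite) (e : Ext) :
    {e' ∈ S | e' ≤ e}.Finite := hS.subset (Set.sep_subset _ _)

private lemma lt_of_rank_lt {S : Set Ext} (hS : S.Finite) {e₁ e₂ : Ext}
    (h1 : e₁ ∈ S) (h2 : e₂ ∈ S)
    (h : {e' ∈ S | e' ≤ e₁}.ncard < {e' ∈ S | e' ≤ e₂}.ncard) : e₁ < e₂ := by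
  by_contra hc
  push_neg at hc
  have hsub : {e' ∈ S | e' ≤ e₂} ⊆ {e' ∈ S | e' ≤ e₁} := by
    rintro x ⟨hx, hxe⟩
    exact ⟨hx, hxe.trans hc⟩
  have := Set.ncard_le_ncard hsub (rank_finite hS e₁)
  omega

private lemma exists_rank {S : Set Ext} (hS : S.Finite) :
    ∀ k, 1 ≤ k → k ≤ S.ncard → ∃ e ∈ S, {e' ∈ S | e' ≤ e}.ncard = k := by
  intro k
  induction k with
  | zero => omega
  | succ k ih =>
    intro _ hk
    rcases Nat.eq_zero_or_pos k with rfl | hk1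
    · have hne : S.Nonempty := Set.nonempty_of_ncard_ne_zero (by omega)
      obtain ⟨e, he, hmin⟩ := Set.exists_min_image S id hS hne
      refine ⟨e, he, ?_⟩
      have hsingle : {e' ∈ S | e' ≤ e} = {e} := by
        ext x
        constructor
        · rintro ⟨hx, hxe⟩
          exact le_antisymm hxe (hmin x hx)
        · rintro rfl
          exact ⟨he, le_rfl⟩
      rw [hsingle, Set.ncard_singleton]
    · obtain ⟨e, he, hre⟩ := ih hk1 (by omega)
      have hU : {e' ∈ S | e < e'}.Nonempty := by
        by_contra hco
        rw [Set.not_nonempty_iff_eq_empty] at hco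
        have hSS : {e' ∈ S | e' ≤ e} = S := by
          ext x
          refine ⟨fun hh => hh.1, fun hx => ⟨hx, ?_⟩⟩
          by_contra hlt
          push_neg at hlt
          have : x ∈ {e' ∈ S | e < e'} := ⟨hx, hlt⟩
          rw [hco] at this
          exact Set.notMem_empty x this
        rw [hSS] at hre
        omega
      obtain ⟨e'', he''U, hmin⟩ :=
        Set.exists_min_image _ id (hS.subset (Set.sep_subset _ _)) hU
      obtain ⟨he''S, hlt⟩ := he''U
      refine ⟨e'', he''S, ?_⟩
      have hins : {e' ∈ S | e' ≤ e''} = insert e'' {e' ∈ S | e' ≤ e} := by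
        ext x
        constructor
        · rintro ⟨hx, hxe⟩
          by_cases hxle : x ≤ e
          · exact Set.mem_insert_iff.mpr (Or.inr ⟨hx, hxle⟩)
          · push_neg at hxle
            have hmx := hmin x ⟨hx, hxle⟩
            exact Set.mem_insert_iff.mpr (Or.inl (le_antisymm hxe hmx))
        · intro hx
          rcases Set.mem_insert_iff.mp hx with rfl | ⟨hx1, hx2⟩
          · exact ⟨he''S, le_rfl⟩
          · exact ⟨hx1, hx2.trans hlt.le⟩
      have hnotmem : e'' ∉ {e' ∈ S | e' ≤ e} := by
        rintro ⟨-, hle⟩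
        exact absurd hlt (not_lt.mpr hle)
      rw [hins, Set.ncard_insert_of_notMem hnotmem (hS.subset (Set.sep_subset _ _))]
      omega

private lemma nthSmall_eq_some {S : Set Ext} {k : ℕ} {e : Ext} (h : nthSmall S k = some e) :
    e ∈ S ∧ {e' ∈ S | e' ≤ e}.ncard = k := by
  unfold nthSmall at h
  split_ifs at h with hex
  · rw [Option.some.injEq] at h
    rw [← h]
    exact hex.choose_spec

private lemma nthSmall_isSome_iff {S : Set Ext} (hS : S.Finite) (k : ℕ) :
    (nthSmall S k).isSome ↔ 1 ≤ k ∧ k ≤ S.ncard := by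
  unfold nthSmall
  split_ifs with hex
  · simp only [Option.isSome_some, true_iff]
    obtain ⟨e, he, hre⟩ := hex
    constructor
    · have hmem : e ∈ {e' ∈ S | e' ≤ e} := ⟨he, le_rfl⟩
      have := (Set.ncard_pos (rank_finite hS e)).mpr ⟨e, hmem⟩
      omega
    · rw [← hre]
      exact Set.ncard_le_ncard (Set.sep_subset _ _) hS
  · simp only [Option.isSome_none, Bool.false_eq_true, false_iff, not_and, not_le]
    intro h1
    by_contra hcon
    push_neg at hcon
    obtain ⟨e, he, hre⟩ := exists_rank hS k h1 hcon
    exact hex ⟨e, he, hre⟩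

private lemma conj_set_finite (lam : Partition) {j : ℕ} (hj : 1 ≤ j) :
    {i : ℕ | 1 ≤ i ∧ j ≤ lam.part i}.Finite := by
  obtain ⟨N, hN⟩ := lam.eventually_zero
  apply Set.Finite.subset (Set.finite_Iio N)
  rintro i ⟨-, hji⟩
  by_contra hcon
  simp only [Set.mem_Iio, not_lt] at hcon
  rw [hN i hcon] at hji
  omega

private lemma conj_anti (lam : Partition) {j j' : ℕ} (hj : 1 ≤ j) (hjj : j ≤ j') :
    lam.conj j' ≤ lam.conj j :=
  Set.ncard_le_ncard (fun i hi => ⟨hi.1, hjj.trans hi.2⟩) (conj_set_finite lam hj)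

private lemma mem_perm_iff (lam : Partition) (n : ℕ) (τ : Equiv.Perm (Fin n)) (r : ℕ)
    (i : Fin n) :
    ((r, i.1 + 1) ∈ permLamCells lam n τ) ↔
      1 ≤ r ∧ (r : ℤ) ≤ (lam.conj ((τ i).1 + 1) : ℤ) - ((τ i).1 + 1) + (i.1 + 1) := by
  obtain ⟨iv, hlt⟩ := i
  constructor
  · rintro ⟨h, h1, h2⟩
    exact ⟨h1, h2⟩
  · rintro ⟨h1, h2⟩
    exact ⟨⟨Nat.le_add_left 1 iv, hlt⟩, h1, h2⟩

private lemma TabU_pos {alpha : ℕ → ℕ} {n : ℕ} {p : NPath n} {r j' : ℕ} (hlt : j' < n)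
    (hc : 1 ≤ j' + 1 ∧ j' + 1 ≤ n ∧ alpha (j' + 1) < r) :
    TabU alpha n p (r, j' + 1)
      = nthSmall (labelSet (p ⟨j', hlt⟩)) (r - alpha (j' + 1)) := by
  unfold TabU
  exact dif_pos hc

private lemma TabU_neg {alpha : ℕ → ℕ} {n : ℕ} {p : NPath n} {r j : ℕ}
    (hc : ¬ (1 ≤ j ∧ j ≤ n ∧ alpha j < r)) :
    TabU alpha n p (r, j) = none := by
  unfold TabU
  exact dif_neg hc

private lemma tab_isVT (lam mu : Partition) (n : ℕ) (σ : Equiv.Perm (Fin n)) (p : NPath n)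
    (hσ : InL lam mu n σ p) :
    IsVTsh (permLamCells lam n σ \ muVertCells mu n) (TabU mu.conj n p) := by
  refine ⟨?_, ?_, ?_⟩
  · -- support
    rintro ⟨r, j⟩
    by_cases hc : 1 ≤ j ∧ j ≤ n ∧ mu.conj j < r
    · obtain ⟨j', rfl⟩ : ∃ j', j' + 1 = j := ⟨j - 1, by omega⟩
      have hlt : j' < n := by omega
      rw [TabU_pos hlt hc]
      have hiv : ((⟨j', hlt⟩ : Fin n) : ℕ) = j' := rfl
      have hs : ((σ ⟨j', hlt⟩).1 + 1) ≤ n := (σ ⟨j', hlt⟩).isLt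
      have hPFT : PathFromTo (p ⟨j', hlt⟩) (mu.conj (j' + 1) + n - (j' + 1))
          (lam.conj ((σ ⟨j', hlt⟩).1 + 1) + n - ((σ ⟨j', hlt⟩).1 + 1)) := (hσ ⟨j', hlt⟩).1
      obtain ⟨hfin, hab, hcard⟩ := pathFromTo_facts hPFT
      rw [nthSmall_isSome_iff hfin, Set.mem_diff]
      have hpm := mem_perm_iff lam n σ r ⟨j', hlt⟩
      constructor
      · rintro ⟨hk1, hk2⟩
        refine ⟨hpm.mpr ⟨by omega, by omega⟩, ?_⟩
        intro hmem
        have hrmu : r ≤ mu.conj (j' + 1) := hmem.2.2.2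
        omega
      · rintro ⟨hperm, hmu⟩
        have h2r := (hpm.mp hperm).2
        constructor
        · omega
        · omega
    · rw [TabU_neg hc]
      simp only [Option.isSome_none, Bool.false_eq_true, false_iff]
      rw [Set.mem_diff]
      rintro ⟨⟨hcnd, h1r, -⟩, hnmu⟩
      have hc1 : 1 ≤ j := hcnd.1
      have hc2 : j ≤ n := hcnd.2
      have h1r' : 1 ≤ r := h1r
      have hrle : r ≤ mu.conj j := by omega
      exact hnmu ⟨hc1, hc2, h1r', hrle⟩
  · -- entries
    rintro ⟨r, j⟩ e hce
    by_cases hc : 1 ≤ j ∧ j ≤ n ∧ mu.conj j < r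
    · obtain ⟨j', rfl⟩ : ∃ j', j' + 1 = j := ⟨j - 1, by omega⟩
      have hlt : j' < n := by omega
      rw [TabU_pos hlt hc] at hce
      obtain ⟨hmem, -⟩ := nthSmall_eq_some hce
      obtain ⟨m, hm, hcase | hcase⟩ := hmem
      · exact ⟨m, hm, Or.inl hcase.2⟩
      · exact ⟨m, hm, Or.inr hcase.2⟩
    · rw [TabU_neg hc] at hce
      cases hce
  · -- column strictness
    intro a j e₁ e₂ h1 h2
    by_cases hc : 1 ≤ j ∧ j ≤ n ∧ mu.conj j < a
    · obtain ⟨j', rfl⟩ : ∃ j', j' + 1 = j := ⟨j - 1, by omega⟩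
      have hlt : j' < n := by omega
      rw [TabU_pos hlt hc] at h1
      rw [TabU_pos hlt ⟨by omega, hc.2.1, by omega⟩] at h2
      have hPFT : PathFromTo (p ⟨j', hlt⟩) (mu.conj (j' + 1) + n - (j' + 1))
          (lam.conj ((σ ⟨j', hlt⟩).1 + 1) + n - ((σ ⟨j', hlt⟩).1 + 1)) := (hσ ⟨j', hlt⟩).1
      obtain ⟨hfin, -, -⟩ := pathFromTo_facts hPFT
      obtain ⟨he1, hr1⟩ := nthSmall_eq_some h1
      obtain ⟨he2, hr2⟩ := nthSmall_eq_some h2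
      have hmlt : mu.conj (j' + 1) < a := hc.2.2
      exact lt_of_rank_lt hfin he1 he2 (by omega)
    · rw [TabU_neg hc] at h1
      cases h1

end AuxProof

/-- **Lemma: for `p ∈ L`, `type(p) = π` iff `Tab(p) ∈ VT(π(λ)/μ)`.**
Here `Tab` is taken with the column offsets `α_j = μ'_j`, and `VT(π(λ)/μ)` is the set of
vertical tableaux whose cell set is the vertical diagram `π(λ)` minus `V(μ')`. -/
theorem type_eq_iff_tab_mem_VT (lam mu : Partition) (n : ℕ) (hsub : Partition.Sub mu lam)
    (hn : lam.part 1 = n) (p : NPath n) (hp : ∃ π, InL lam mu n π p)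
    (π : Equiv.Perm (Fin n)) :
    InL lam mu n π p ↔
      IsVTsh (permLamCells lam n π \ muVertCells mu n) (TabU mu.conj n p) := by
  obtain ⟨σ, hσ⟩ := hp
  constructor
  · intro hπ
    exact tab_isVT lam mu n π p hπ
  · intro hT
    have hVσ := tab_isVT lam mu n σ p hσ
    have hsupp : ∀ c, c ∈ permLamCells lam n π \ muVertCells mu n ↔
        c ∈ permLamCells lam n σ \ muVertCells mu n :=
      fun c => (hT.1 c).symm.trans (hVσ.1 c)
    have hmuB : ∀ i : Fin n,
        (mu.conj (i.1 + 1) : ℤ) ≤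
          (lam.conj ((σ i).1 + 1) : ℤ) - ((σ i).1 + 1) + (i.1 + 1) := by
      intro i
      obtain ⟨hPFT, -, -⟩ := hσ i
      have hab := (pathFromTo_facts hPFT).2.1
      have hs : (σ i).1 + 1 ≤ n := (σ i).isLt
      have hin : i.1 + 1 ≤ n := i.isLt
      omega
    set F : Equiv.Perm (Fin n) → Fin n → ℤ := fun τ i =>
      (lam.conj ((τ i).1 + 1) : ℤ) - ((τ i).1 + 1) + (i.1 + 1) with hF
    have hle : ∀ i : Fin n, F π i ≤ F σ i := by
      intro i
      by_contra hcon
      push_neg at hcon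
      rw [hF] at hcon
      simp only at hcon
      have hmB := hmuB i
      have hs : (σ i).1 + 1 ≤ n := (σ i).isLt
      set r : ℕ := lam.conj ((σ i).1 + 1) + (i.1 + 1) - ((σ i).1 + 1) + 1 with hrdef
      have hr : (r : ℤ) =
          (lam.conj ((σ i).1 + 1) : ℤ) - ((σ i).1 + 1) + (i.1 + 1) + 1 := by omega
      have hmem : (r, i.1 + 1) ∈ permLamCells lam n π \ muVertCells mu n := by
        rw [Set.mem_diff]
        constructor
        · exact (mem_perm_iff lam n π r i).mpr ⟨by omega, by omega⟩
        · intro hmm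
          have hrmu : r ≤ mu.conj (i.1 + 1) := hmm.2.2.2
          omega
      have hmem2 := ((hsupp _).mp hmem).1
      have h2 := ((mem_perm_iff lam n σ r i).mp hmem2).2
      omega
    have key : ∀ τ : Equiv.Perm (Fin n), ∑ i : Fin n, F τ i =
        (∑ k : Fin n, ((lam.conj (k.1 + 1) : ℤ) - (k.1 + 1))) +
          ∑ i : Fin n, ((i.1 : ℤ) + 1) := by
      intro τ
      simp only [hF]
      rw [Finset.sum_add_distrib]
      congr 1
      exact Equiv.sum_comp τ (fun k : Fin n => (lam.conj (k.1 + 1) : ℤ) - (k.1 + 1))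
    have hsum : ∑ i : Fin n, F π i = ∑ i : Fin n, F σ i := (key π).trans (key σ).symm
    have heq : ∀ i : Fin n, F π i = F σ i := by
      intro i
      by_contra hne
      have hlt : F π i < F σ i := lt_of_le_of_ne (hle i) hne
      have := Finset.sum_lt_sum (fun k _ => hle k) ⟨i, Finset.mem_univ i, hlt⟩
      omega
    have hperm : π = σ := by
      apply Equiv.ext
      intro i
      have hBi := heq i
      rw [hF] at hBi
      simp only at hBi
      rcases lt_trichotomy ((π i).1) ((σ i).1) with hlt | heqv | hlt
      · have hba := conj_anti lam (Nat.le_add_left 1 (π i).1)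
          (by omega : (π i).1 + 1 ≤ (σ i).1 + 1)
        omega
      · exact Fin.ext heqv
      · have hba := conj_anti lam (Nat.le_add_left 1 (σ i).1)
          (by omega : (σ i).1 + 1 ≤ (π i).1 + 1)
        omega
    rw [hperm]
    exact hσ


end GrothJT
end
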